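/- Let m ≥ 2 and τ > 0, and let T be a real-valued set function defined on the open convex subsets of ℝ^m that is invariant under isometries of ℝ^m, monotone (Ω₁ ⊆ Ω₂ implies T(Ω₁) ≤ T(Ω₂) for open convex Ω₁, Ω₂), non-negative, and homogeneous of degree τ (T(αΩ) = α^τ·T(Ω) for every α > 0 and every open convex Ω). Let A be a nonempty open bounded convex subset of ℝ^m, let ρ > 0 and x ∈ ℝ^m be such that the open ball B(x;ρ) ⊆ A, and let ε > 0. Then T(A^ε) ≤ (1 + ε/ρ)^τ·T(A), where A^ε = {y ∈ ℝ^m : dist(y,A) < ε}. -/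

import Mathlib

open MeasureTheory Metric Pointwise

/-- for a set function `T` on the open convex subsets of `ℝ^m` which is
isometry invariant, monotone, non-negative and homogeneous of degree `τ > 0`, a nonempty
open bounded convex set `A` containing a ball `B(x; ρ)`, and `ε > 0`, the open
`ε`-neighbourhood `A^ε` satisfies `T(A^ε) ≤ (1 + ε/ρ)^τ T(A)`. -/
theorem T_eps_neighbourhood_le (m : ℕ) (hm : 2 ≤ m) (τ : ℝ) (hτ : 0 < τ)
    (T : Set (EuclideanSpace ℝ (Fin m)) → ℝ)
    (hiso : ∀ (f : EuclideanSpace ℝ (Fin m) ≃ᵢ EuclideanSpace ℝ (Fin m))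
      (Ω : Set (EuclideanSpace ℝ (Fin m))), IsOpen Ω → Convex ℝ Ω → T (f '' Ω) = T Ω)
    (hmono : ∀ Ω₁ Ω₂ : Set (EuclideanSpace ℝ (Fin m)), IsOpen Ω₁ → Convex ℝ Ω₁ →
      IsOpen Ω₂ → Convex ℝ Ω₂ → Ω₁ ⊆ Ω₂ → T Ω₁ ≤ T Ω₂)
    (hnonneg : ∀ Ω : Set (EuclideanSpace ℝ (Fin m)), IsOpen Ω → Convex ℝ Ω → 0 ≤ T Ω)
    (hhom : ∀ (α : ℝ), 0 < α → ∀ Ω : Set (EuclideanSpace ℝ (Fin m)), IsOpen Ω →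
      Convex ℝ Ω → T (α • Ω) = α ^ τ * T Ω)
    (A : Set (EuclideanSpace ℝ (Fin m)))
    (hAne : A.Nonempty) (hAbd : Bornology.IsBounded A)
    (hAopen : IsOpen A) (hAconv : Convex ℝ A)
    (x : EuclideanSpace ℝ (Fin m)) (ρ : ℝ) (hρ : 0 < ρ) (hball : ball x ρ ⊆ A)
    (ε : ℝ) (hε : 0 < ε) :
    T {y : EuclideanSpace ℝ (Fin m) | infDist y A < ε} ≤ (1 + ε / ρ) ^ τ * T A := by
  set c : ℝ := 1 + ε / ρ with hc
  have hc1 : 1 < c := by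
    have h : 0 < ε / ρ := div_pos hε hρ
    show (1 : ℝ) < 1 + ε / ρ
    linarith
  have hc0 : 0 < c := lt_trans one_pos hc1
  -- the set S is the thickening
  have hSeq : {y : EuclideanSpace ℝ (Fin m) | infDist y A < ε} = thickening ε A := by
    ext y
    simp [Metric.mem_thickening_iff_infDist_lt hAne]
  -- translated set A₁ = A - x
  set f₁ := IsometryEquiv.addRight (-x) with hf₁
  set A₁ := f₁ '' A with hA₁
  have hA₁open : IsOpen A₁ := f₁.toHomeomorph.isOpenMap A hAopen
  have hA₁conv : Convex ℝ A₁ := by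
    have : A₁ = A + {-x} := by
      ext z; simp [hA₁, Set.mem_add, hf₁, IsometryEquiv.addRight]
      exact ⟨fun ⟨w, hw, h⟩ => by subst h; change w + -x + x ∈ A; simpa using hw, fun h => ⟨z + x, h, show z + x + -x = z by simp⟩⟩
    rw [this]
    exact hAconv.add (convex_singleton _)
  -- scaled set
  set A₂ := c • A₁ with hA₂
  have hA₂open : IsOpen A₂ := hA₁open.smul₀ (ne_of_gt hc0)
  have hA₂conv : Convex ℝ A₂ := hA₁conv.smul c
  -- translated back
  set f₂ := IsometryEquiv.addRight x with hf₂
  set A₃ := f₂ '' A₂ with hA₃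
  have hA₃open : IsOpen A₃ := f₂.toHomeomorph.isOpenMap A₂ hA₂open
  have hA₃conv : Convex ℝ A₃ := by
    have : A₃ = A₂ + {x} := by
      ext z; simp [hA₃, Set.mem_add, hf₂, IsometryEquiv.addRight]
      exact ⟨fun ⟨w, hw, h⟩ => by subst h; change w + x + -x ∈ A₂; simpa using hw, fun h => ⟨z + -x, h, show z + -x + x = z by simp⟩⟩
    rw [this]
    exact hA₂conv.add (convex_singleton _)
  -- inclusion
  have hsub : {y : EuclideanSpace ℝ (Fin m) | infDist y A < ε} ⊆ A₃ := by
    intro y hy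
    obtain ⟨a, haA, hya⟩ := (Metric.infDist_lt_iff hAne).1 hy
    set e := y - a with he
    have hne : ‖e‖ < ε := by
      rw [he, ← dist_eq_norm]; exact hya
    set a' := x + (ρ / ε) • e with ha'
    have ha'A : a' ∈ A := by
      apply hball
      rw [mem_ball, dist_eq_norm]
      have : a' - x = (ρ / ε) • e := by rw [ha']; abel
      rw [this, norm_smul, Real.norm_eq_abs, abs_of_pos (div_pos hρ hε)]
      calc ρ / ε * ‖e‖ < ρ / ε * ε := by
            exact mul_lt_mul_of_pos_left hne (div_pos hρ hε)
        _ = ρ := div_mul_cancel₀ ρ (ne_of_gt hε)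
    set z := (1 / c) • a + (1 - 1 / c) • a' with hz
    have hzA : z ∈ A := by
      apply hAconv haA ha'A
      · positivity
      · have : 1 / c < 1 := by
          rw [div_lt_one hc0]; exact hc1
        linarith
      · ring
    have hyz : f₂ (c • (f₁ z)) = y := by
      have hf₁z : f₁ z = z + -x := rfl
      have hf₂' : ∀ w, f₂ w = w + x := fun w => rfl
      rw [hf₂', hf₁z, hz, ha', he]
      have hcε : (c - 1) * (ρ / ε) = 1 := by
        rw [hc]; field_simp; ring
      have hcn : c ≠ 0 := ne_of_gt hc0
      match_scalars
      · linear_combination (1 + ρ / ε) * mul_inv_cancel₀ hcn - hcε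
      · linear_combination (-1 : ℝ) * mul_inv_cancel₀ hcn
      · linear_combination hcε - (ρ / ε) * mul_inv_cancel₀ hcn
    exact ⟨c • (f₁ z), ⟨f₁ z, ⟨z, hzA, rfl⟩, rfl⟩, hyz⟩
  -- now the T computation
  calc T {y : EuclideanSpace ℝ (Fin m) | infDist y A < ε}
      ≤ T A₃ := by
        apply hmono _ _ _ _ hA₃open hA₃conv hsub
        · rw [hSeq]; exact isOpen_thickening
        · rw [hSeq]; exact hAconv.thickening ε
    _ = T A₂ := hiso f₂ A₂ hA₂open hA₂conv
    _ = c ^ τ * T A₁ := hhom c hc0 A₁ hA₁open hA₁conv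
    _ = c ^ τ * T A := by rw [hiso f₁ A hAopen hAconv]
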